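/- (One-soliton solution of the nonlocal massive Thirring model) Let k, h ∈ ℂ with k ≠ 0 and h ≠ 0. Define E_k(x,t) = exp(−i·(k²·x + t/k²)), E_h(x,t) = exp(−i·(h²·x + t/h²)), D1 = k·E_h + h·E_k, D2 = k·E_k + h·E_h, and set q1 = (h² − k²)/D1 and q3 = (h² − k²)/(k·h·D2). Then at every (x,t) ∈ ℝ² such that D1(x,t) ≠ 0 and D2(x,t) ≠ 0, the pair (q1, q3) satisfies the nonlocal massive Thirring model with δ = 1 at (x,t): i·∂ₜq1(x,t) + q3(x,t) + q1(x,t)·q3(x,t)·q3(−x,−t) = 0 and i·∂ₓq3(x,t) + q1(x,t) + q3(x,t)·q1(x,t)·q1(−x,−t) = 0. -/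

import Mathlib

open Complex

/-- Partial derivative with respect to the first (space) variable. -/
noncomputable def pdx (f : ℝ × ℝ → ℂ) (p : ℝ × ℝ) : ℂ := fderiv ℝ f p (1, 0)

/-- Partial derivative with respect to the second (time) variable. -/
noncomputable def pdt (f : ℝ × ℝ → ℂ) (p : ℝ × ℝ) : ℂ := fderiv ℝ f p (0, 1)

noncomputable def linCLM (a b : ℂ) : ℝ × ℝ →L[ℝ] ℂ :=
  a • ((Complex.ofRealCLM).comp (ContinuousLinearMap.fst ℝ ℝ ℝ)) +
  b • ((Complex.ofRealCLM).comp (ContinuousLinearMap.snd ℝ ℝ ℝ))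

@[simp] lemma linCLM_apply (a b : ℂ) (v : ℝ × ℝ) :
    linCLM a b v = a * v.1 + b * v.2 := by
  simp [linCLM, smul_eq_mul]

lemma hasFDerivAt_explin (a b : ℂ) (p : ℝ × ℝ) :
    HasFDerivAt (fun q : ℝ × ℝ => exp (a * q.1 + b * q.2))
      (exp (a * p.1 + b * p.2) • linCLM a b) p := by
  have hl : HasFDerivAt (fun q : ℝ × ℝ => a * (q.1 : ℂ) + b * (q.2 : ℂ)) (linCLM a b) p := by
    have := (linCLM a b).hasFDerivAt (x := p)
    apply this.congr_of_eventuallyEq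
    filter_upwards with q
    simp
  exact hl.cexp

set_option maxHeartbeats 1000000 in
/-- One-soliton solution of the nonlocal massive Thirring model with `δ = 1`. -/
theorem oneSoliton_nonlocalMTM (k h : ℂ) (hk : k ≠ 0) (hh : h ≠ 0)
    (Ek Eh D1 D2 q1 q3 : ℝ × ℝ → ℂ)
    (hEk : Ek = fun p => exp (-I * (k ^ 2 * (p.1 : ℂ) + (p.2 : ℂ) / k ^ 2)))
    (hEh : Eh = fun p => exp (-I * (h ^ 2 * (p.1 : ℂ) + (p.2 : ℂ) / h ^ 2)))
    (hD1 : D1 = fun p => k * Eh p + h * Ek p)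
    (hD2 : D2 = fun p => k * Ek p + h * Eh p)
    (hq1 : q1 = fun p => (h ^ 2 - k ^ 2) / D1 p)
    (hq3 : q3 = fun p => (h ^ 2 - k ^ 2) / (k * h * D2 p)) :
    ∀ p : ℝ × ℝ, D1 p ≠ 0 → D2 p ≠ 0 →
      (I * pdt q1 p + q3 p + q1 p * q3 p * q3 (-p) = 0) ∧
      (I * pdx q3 p + q1 p + q3 p * q1 p * q1 (-p) = 0) := by
  intro p hd1 hd2
  set c : ℂ := h ^ 2 - k ^ 2 with hc
  -- rewrite Ek, Eh in linear-coefficient form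
  have hEk' : Ek = fun q : ℝ × ℝ => exp ((-I * k ^ 2) * q.1 + (-I / k ^ 2) * q.2) := by
    rw [hEk]; funext q; congr 1; field_simp; ring
  have hEh' : Eh = fun q : ℝ × ℝ => exp ((-I * h ^ 2) * q.1 + (-I / h ^ 2) * q.2) := by
    rw [hEh]; funext q; congr 1; field_simp; ring
  have hEkd : HasFDerivAt Ek (Ek p • linCLM (-I * k ^ 2) (-I / k ^ 2)) p := by
    rw [hEk']; exact hasFDerivAt_explin _ _ p
  have hEhd : HasFDerivAt Eh (Eh p • linCLM (-I * h ^ 2) (-I / h ^ 2)) p := by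
    rw [hEh']; exact hasFDerivAt_explin _ _ p
  have hEk0 : Ek p ≠ 0 := by rw [hEk]; exact exp_ne_zero _
  have hEh0 : Eh p ≠ 0 := by rw [hEh]; exact exp_ne_zero _
  -- values at -p
  have hEkneg : Ek (-p) = (Ek p)⁻¹ := by
    rw [hEk]; simp only [Prod.fst_neg, Prod.snd_neg, ofReal_neg]
    rw [← Complex.exp_neg]; congr 1; ring
  have hEhneg : Eh (-p) = (Eh p)⁻¹ := by
    rw [hEh]; simp only [Prod.fst_neg, Prod.snd_neg, ofReal_neg]
    rw [← Complex.exp_neg]; congr 1; ring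
  have hD1neg : D1 (-p) = (k * (Eh p)⁻¹ + h * (Ek p)⁻¹) := by
    rw [hD1]; simp [hEkneg, hEhneg]
  have hD2neg : D2 (-p) = (k * (Ek p)⁻¹ + h * (Eh p)⁻¹) := by
    rw [hD2]; simp [hEkneg, hEhneg]
  have hd1' : (k * Eh p + h * Ek p) ≠ 0 := by rw [hD1] at hd1; exact hd1
  have hd2' : (k * Ek p + h * Eh p) ≠ 0 := by rw [hD2] at hd2; exact hd2
  have e1 : k * (Eh p)⁻¹ + h * (Ek p)⁻¹ = (k * Ek p + h * Eh p) / (Ek p * Eh p) := by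
    rw [eq_div_iff (mul_ne_zero hEk0 hEh0)]
    have h1 : (Eh p)⁻¹ * Eh p = 1 := inv_mul_cancel₀ hEh0
    have h2 : (Ek p)⁻¹ * Ek p = 1 := inv_mul_cancel₀ hEk0
    linear_combination (k * Ek p) * h1 + (h * Eh p) * h2
  have e2 : k * (Ek p)⁻¹ + h * (Eh p)⁻¹ = (k * Eh p + h * Ek p) / (Ek p * Eh p) := by
    rw [eq_div_iff (mul_ne_zero hEk0 hEh0)]
    have h1 : (Eh p)⁻¹ * Eh p = 1 := inv_mul_cancel₀ hEh0
    have h2 : (Ek p)⁻¹ * Ek p = 1 := inv_mul_cancel₀ hEk0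
    linear_combination (h * Ek p) * h1 + (k * Eh p) * h2
  -- derivatives of D1, D2
  have hD1d : HasFDerivAt D1
      (k • (Eh p • linCLM (-I * h ^ 2) (-I / h ^ 2)) +
       h • (Ek p • linCLM (-I * k ^ 2) (-I / k ^ 2))) p := by
    rw [hD1]; exact (hEhd.const_mul k).add (hEkd.const_mul h)
  have hD2d : HasFDerivAt D2
      (k • (Ek p • linCLM (-I * k ^ 2) (-I / k ^ 2)) +
       h • (Eh p • linCLM (-I * h ^ 2) (-I / h ^ 2))) p := by
    rw [hD2]; exact (hEkd.const_mul k).add (hEhd.const_mul h)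
  -- derivative of q1
  have hq1d : HasFDerivAt q1
      (c • ((-(D1 p ^ 2)⁻¹) • (k • (Eh p • linCLM (-I * h ^ 2) (-I / h ^ 2)) +
       h • (Ek p • linCLM (-I * k ^ 2) (-I / k ^ 2))))) p := by
    have : q1 = fun r => c * (D1 r)⁻¹ := by
      rw [hq1]; funext r; rw [div_eq_mul_inv]
    rw [this]
    exact ((hasDerivAt_inv hd1).comp_hasFDerivAt p hD1d).const_mul c
  have hq3d : HasFDerivAt q3
      ((c / (k * h)) • ((-(D2 p ^ 2)⁻¹) • (k • (Ek p • linCLM (-I * k ^ 2) (-I / k ^ 2)) +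
       h • (Eh p • linCLM (-I * h ^ 2) (-I / h ^ 2))))) p := by
    have : q3 = fun r => (c / (k * h)) * (D2 r)⁻¹ := by
      rw [hq3]; funext r; rw [div_eq_mul_inv, mul_inv, mul_inv]; ring
    rw [this]
    exact ((hasDerivAt_inv hd2).comp_hasFDerivAt p hD2d).const_mul _
  have hpdt : pdt q1 p = c * (-(D1 p ^ 2)⁻¹ *
      (k * (Eh p * (-I / h ^ 2)) + h * (Ek p * (-I / k ^ 2)))) := by
    rw [pdt, hq1d.fderiv]
    simp only [ContinuousLinearMap.coe_smul', Pi.smul_apply, ContinuousLinearMap.add_apply,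
      ContinuousLinearMap.coe_smul', Pi.smul_apply, linCLM_apply, smul_eq_mul]
    push_cast
    ring
  have hpdx : pdx q3 p = (c / (k * h)) * (-(D2 p ^ 2)⁻¹ *
      (k * (Ek p * (-I * k ^ 2)) + h * (Eh p * (-I * h ^ 2)))) := by
    rw [pdx, hq3d.fderiv]
    simp only [ContinuousLinearMap.coe_smul', Pi.smul_apply, ContinuousLinearMap.add_apply,
      ContinuousLinearMap.coe_smul', Pi.smul_apply, linCLM_apply, smul_eq_mul]
    push_cast
    ring
  have hIpdt : I * pdt q1 p = -(c * ((k * Eh p + h * Ek p) ^ 2)⁻¹ *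
      (k * Eh p * (h ^ 2)⁻¹ + h * Ek p * (k ^ 2)⁻¹)) := by
    rw [hpdt, hD1]
    linear_combination (c * ((k * Eh p + h * Ek p) ^ 2)⁻¹ *
      (k * Eh p * (h ^ 2)⁻¹ + h * Ek p * (k ^ 2)⁻¹)) * Complex.I_mul_I
  have hIpdx : I * pdx q3 p = -(c / (k * h) * ((k * Ek p + h * Eh p) ^ 2)⁻¹ *
      (k * Ek p * k ^ 2 + h * Eh p * h ^ 2)) := by
    rw [hpdx, hD2]
    linear_combination (c / (k * h) * ((k * Ek p + h * Eh p) ^ 2)⁻¹ *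
      (k * Ek p * k ^ 2 + h * Eh p * h ^ 2)) * Complex.I_mul_I
  have hq3neg : q3 (-p) = c * (Ek p * Eh p) / (k * h * (k * Eh p + h * Ek p)) := by
    simp only [hq3]
    rw [hD2neg, e2, ← mul_div_assoc, div_div_eq_mul_div]
  have hq1neg : q1 (-p) = c * (Ek p * Eh p) / (k * Ek p + h * Eh p) := by
    simp only [hq1]
    rw [hD1neg, e1, div_div_eq_mul_div]
  constructor
  · rw [hIpdt, hq3neg]
    simp only [hq1, hq3, hD1, hD2]
    field_simp
    have hd2'' : k * Ek p + Eh p * h ≠ 0 := by rwa [mul_comm (Eh p)]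
    rw [mul_zero, hc]
    linear_combination ((h ^ 2 - k ^ 2) * (k ^ 3 * Eh p + h ^ 3 * Ek p)) * mul_inv_cancel₀ hd2''
  · rw [hIpdx, hq1neg]
    simp only [hq1, hq3, hD1, hD2]
    field_simp
    rw [mul_zero, hc]
    ring
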